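/- Let M > 0 and consider the 3×3 real matrix B_M = [[0, 2, 0], [−M, −M, 1], [2M, 0, −M]], the coefficient matrix of the linear system A_{2,0}' = 2A_{1,1}, A_{1,1}' = A_{0,2} − M A_{1,1} − M A_{2,0}, A_{0,2}' = 2M A_{2,0} − M A_{0,2} + 2M². If M > 2 then every eigenvalue of B_M has negative real part, while if 0 < M < 2 then B_M has at least one eigenvalue with positive real part. -/
import Mathlib

open Matrix Polynomial

/-- The coefficient matrix of the second-order moment system of Model A,
unknowns ordered as `(A_{2,0}, A_{1,1}, A_{0,2})`. -/
noncomputable def BmatA (M : ℝ) : Matrix (Fin 3) (Fin 3) ℝ :=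
  !![0, 2, 0; -M, -M, 1; 2 * M, 0, -M]

lemma eval_charpoly_BmatA (M : ℝ) (z : ℂ) :
    (Matrix.charpoly ((BmatA M).map (Complex.ofReal))).eval z
      = z^3 + 2*M*z^2 + M*(M+2)*z + 2*M*(M-2) := by
  rw [Matrix.charpoly, ← Polynomial.coe_evalRingHom, RingHom.map_det]
  simp [BmatA, Matrix.det_fin_three, charmatrix_apply, Matrix.one_apply]
  ring

lemma BmatA_stable (M : ℝ) (hM : 2 < M) (z : ℂ)
    (hz : (Matrix.charpoly ((BmatA M).map (Complex.ofReal))).IsRoot z) : z.re < 0 := by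
  have heq : z^3 + 2*(M:ℂ)*z^2 + M*(M+2)*z + 2*M*(M-2) = 0 := by
    rw [← eval_charpoly_BmatA]; exact hz
  set a := z.re with ha'
  set b := z.im with hb'
  have hzab : z = Complex.ofReal a + Complex.ofReal b * Complex.I :=
    (Complex.re_add_im z).symm
  rw [hzab] at heq
  have h1 : a^3 - 3*a*b^2 + 2*M*(a^2-b^2) + M*(M+2)*a + 2*M*(M-2) = 0 := by
    have := congrArg Complex.re heq
    simp [Complex.add_re, Complex.mul_re, Complex.mul_im, pow_succ] at this
    linarith [this]
  have h2 : b * (3*a^2 - b^2 + 4*M*a + M*(M+2)) = 0 := by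
    have := congrArg Complex.im heq
    simp [Complex.add_im, Complex.mul_re, Complex.mul_im, pow_succ] at this
    nlinarith [this]
  by_contra hge
  push_neg at hge
  rcases mul_eq_zero.mp h2 with hb0 | hbr
  · rw [hb0] at h1
    have hMp : (0:ℝ) < M := lt_trans two_pos hM
    nlinarith [mul_nonneg hge (mul_nonneg hge hge),
      mul_nonneg hMp.le (mul_nonneg hge hge),
      mul_nonneg (mul_nonneg hMp.le (by linarith : (0:ℝ) ≤ M + 2)) hge,
      mul_pos hMp (by linarith : (0:ℝ) < M - 2)]
  · have hb2 : b^2 = 3*a^2 + 4*M*a + M*(M+2) := by linarith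
    rw [hb2] at h1
    nlinarith [mul_nonneg hge (mul_nonneg hge hge), sq_nonneg a,
      mul_nonneg (mul_nonneg hge hge) (le_of_lt (lt_trans two_pos hM)),
      mul_nonneg hge (le_of_lt (lt_trans two_pos hM))]

lemma BmatA_unstable (M : ℝ) (h0 : 0 < M) (h2 : M < 2) :
    ∃ z : ℂ, (Matrix.charpoly ((BmatA M).map (Complex.ofReal))).IsRoot z ∧ 0 < z.re := by
  set q : ℝ → ℝ := fun x => x^3 + 2*M*x^2 + M*(M+2)*x + 2*M*(M-2) with hq
  have hc : ContinuousOn q (Set.Icc 0 2) := by fun_prop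
  have h02 : (0:ℝ) ≤ 2 := by norm_num
  have hmem : (0:ℝ) ∈ Set.Ioo (q 0) (q 2) := by
    constructor <;> simp [hq] <;> nlinarith
  obtain ⟨r, hr, hqr⟩ := intermediate_value_Ioo h02 hc hmem
  refine ⟨(r:ℂ), ?_, by simpa using hr.1⟩
  have : (Matrix.charpoly ((BmatA M).map (Complex.ofReal))).eval (r:ℂ) = 0 := by
    rw [eval_charpoly_BmatA]
    have : ((q r : ℝ) : ℂ) = 0 := by rw [hqr]; norm_num
    push_cast [hq] at this ⊢
    linear_combination this
  exact this

/-- For `M > 2` every (complex) eigenvalue of `B_M` has negative real part, while for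
`0 < M < 2` there is at least one eigenvalue with positive real part. -/
theorem BmatA_critical_mass (M : ℝ) :
    (2 < M → ∀ z : ℂ,
      (Matrix.charpoly ((BmatA M).map (Complex.ofReal))).IsRoot z → z.re < 0) ∧
    (0 < M → M < 2 → ∃ z : ℂ,
      (Matrix.charpoly ((BmatA M).map (Complex.ofReal))).IsRoot z ∧ 0 < z.re) := by
  exact ⟨fun hM z hz => BmatA_stable M hM z hz, fun h0 h2 => BmatA_unstable M h0 h2⟩
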